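/- For every Hermitian nonnegative definite T×T matrix R and all λ, λ′ ∈ ℝ, |d_T(λ)^H R d_T(λ) − d_T(λ′)^H R d_T(λ′)| ≤ (2/√3) ‖R‖ T |λ − λ′|, where d_T(λ) = T^{−1/2}(1, e^{−iλ}, …, e^{−i(T−1)λ})^T. In particular, |E Υ̂ᵇ_T(λ) − E Υ̂ᵇ_T(λ′)| ≤ (2/√3) ‖R_T‖ T |λ − λ′|. -/

import Mathlib

open Matrix
open scoped ComplexOrder

noncomputable section

/-- Spectral (L2 operator) norm of a square complex matrix. -/
def specNorm {n : ℕ} (A : Matrix (Fin n) (Fin n) ℂ) : ℝ :=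
  ‖Matrix.toEuclideanCLM (𝕜 := ℂ) A‖

/-- The vector `d_T(λ) = T^{-1/2}(1, e^{-iλ}, …, e^{-i(T-1)λ})ᵀ`. -/
def dT (T : ℕ) (lam : ℝ) : Fin T → ℂ :=
  fun t => (1 / (Real.sqrt T : ℂ)) * Complex.exp (-(Complex.I * t * lam))

end

lemma aux_exp_norm_one (c x : ℝ) : ‖Complex.exp (-(Complex.I * c * x))‖ = 1 := by
  rw [Complex.norm_exp]
  simp

lemma aux_exp_lipschitz (c : ℝ) (hc : 0 ≤ c) (a b : ℝ) :
    ‖Complex.exp (-(Complex.I * c * a)) - Complex.exp (-(Complex.I * c * b))‖ ≤ c * |a - b| := by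
  have hderiv : ∀ x : ℝ, HasDerivAt (fun x : ℝ => Complex.exp (-(Complex.I * c * x)))
      (-(Complex.I * c) * Complex.exp (-(Complex.I * c * x))) x := by
    intro x
    have h1 : HasDerivAt (fun x : ℝ => -(Complex.I * c * x)) (-(Complex.I * c)) x := by
      have := ((hasDerivAt_id x).ofReal_comp).const_mul (Complex.I * c)
      exact (by simpa using this : HasDerivAt (fun y : ℝ => Complex.I * c * y) (Complex.I * c) x).neg
    simpa [mul_comm] using h1.cexp
  have hb : ∀ x : ℝ, ‖-(Complex.I * c) * Complex.exp (-(Complex.I * c * x))‖ ≤ c := by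
    intro x
    rw [norm_mul, norm_neg, aux_exp_norm_one]
    simp [Complex.normSq_apply, abs_of_nonneg hc]
  have := Convex.norm_image_sub_le_of_norm_hasDerivWithin_le
    (f := fun x : ℝ => Complex.exp (-(Complex.I * c * x)))
    (f' := fun x : ℝ => -(Complex.I * c) * Complex.exp (-(Complex.I * c * x)))
    (s := Set.univ) (fun x _ => (hderiv x).hasDerivWithinAt)
    (fun x _ => hb x) convex_univ (Set.mem_univ b) (Set.mem_univ a)
  simpa [Real.norm_eq_abs] using this

lemma aux_sum_sq (T : ℕ) : 3 * ∑ t ∈ Finset.range T, t ^ 2 ≤ T ^ 3 := by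
  induction T with
  | zero => simp
  | succ n ih =>
    rw [Finset.sum_range_succ]
    have h : (n + 1) ^ 3 = n ^ 3 + 3 * n ^ 2 + 3 * n + 1 := by ring
    rw [Nat.mul_add, h]
    omega

lemma aux_fin_cast (T : ℕ) (t : Fin T) : ((t : ℂ)) = (((t : ℕ) : ℝ) : ℂ) := by
  push_cast; ring

lemma aux_dT_norm (T : ℕ) (hT : 0 < T) (a : ℝ) :
    ‖(WithLp.equiv 2 (Fin T → ℂ)).symm (dT T a)‖ = 1 := by
  rw [EuclideanSpace.norm_eq]
  have h : ∀ t : Fin T, ‖dT T a t‖ = 1 / Real.sqrt T := by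
    intro t
    rw [dT, norm_mul, aux_fin_cast, aux_exp_norm_one]
    simp [Real.sqrt_nonneg, abs_of_nonneg]
  have : (∑ t : Fin T, ‖(WithLp.equiv 2 (Fin T → ℂ)).symm (dT T a) t‖ ^ 2) = 1 := by
    have h2 : ∀ t : Fin T, ‖(WithLp.equiv 2 (Fin T → ℂ)).symm (dT T a) t‖ ^ 2
        = 1 / T := by
      intro t
      have : ((WithLp.equiv 2 (Fin T → ℂ)).symm (dT T a)) t = dT T a t := rfl
      rw [this, h t, div_pow, one_pow, Real.sq_sqrt (Nat.cast_nonneg T)]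
    rw [Finset.sum_congr rfl fun t _ => h2 t]
    rw [Finset.sum_const, Finset.card_univ, Fintype.card_fin, nsmul_eq_mul]
    have hT' : (T : ℝ) ≠ 0 := Nat.cast_ne_zero.mpr hT.ne'
    field_simp
  rw [this, Real.sqrt_one]

lemma aux_dT_sub_norm (T : ℕ) (hT : 0 < T) (a b : ℝ) :
    ‖(WithLp.equiv 2 (Fin T → ℂ)).symm (dT T a) - (WithLp.equiv 2 (Fin T → ℂ)).symm (dT T b)‖
      ≤ (T : ℝ) / Real.sqrt 3 * |a - b| := by
  rw [EuclideanSpace.norm_eq]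
  have key : (∑ t : Fin T, ‖((WithLp.equiv 2 (Fin T → ℂ)).symm (dT T a)
      - (WithLp.equiv 2 (Fin T → ℂ)).symm (dT T b)) t‖ ^ 2)
      ≤ (T : ℝ) ^ 2 / 3 * (a - b) ^ 2 := by
    have hterm : ∀ t : Fin T, ‖((WithLp.equiv 2 (Fin T → ℂ)).symm (dT T a)
        - (WithLp.equiv 2 (Fin T → ℂ)).symm (dT T b)) t‖ ^ 2
        ≤ (1 / T) * ((t : ℕ) : ℝ) ^ 2 * (a - b) ^ 2 := by
      intro t
      have happ : ((WithLp.equiv 2 (Fin T → ℂ)).symm (dT T a)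
          - (WithLp.equiv 2 (Fin T → ℂ)).symm (dT T b)) t = dT T a t - dT T b t := rfl
      rw [happ]
      have h1 : ‖dT T a t - dT T b t‖ ≤ (1 / Real.sqrt T) * (((t : ℕ) : ℝ) * |a - b|) := by
        simp only [dT]
        rw [← mul_sub, norm_mul]
        have hn : ‖(1 / (Real.sqrt T : ℂ))‖ = 1 / Real.sqrt T := by
          simp [abs_of_nonneg (Real.sqrt_nonneg (T : ℝ))]
        rw [hn, aux_fin_cast]
        gcongr
        exact aux_exp_lipschitz _ (Nat.cast_nonneg _) a b
      calc ‖dT T a t - dT T b t‖ ^ 2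
          ≤ ((1 / Real.sqrt T) * (((t : ℕ) : ℝ) * |a - b|)) ^ 2 :=
            pow_le_pow_left₀ (norm_nonneg _) h1 2
        _ = (1 / T) * ((t : ℕ) : ℝ) ^ 2 * (a - b) ^ 2 := by
            rw [mul_pow, mul_pow, div_pow, one_pow, Real.sq_sqrt (Nat.cast_nonneg T),
              sq_abs]
            ring
    calc (∑ t : Fin T, ‖((WithLp.equiv 2 (Fin T → ℂ)).symm (dT T a)
          - (WithLp.equiv 2 (Fin T → ℂ)).symm (dT T b)) t‖ ^ 2)
        ≤ ∑ t : Fin T, (1 / T) * ((t : ℕ) : ℝ) ^ 2 * (a - b) ^ 2 :=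
          Finset.sum_le_sum fun t _ => hterm t
      _ = (1 / T) * (a - b) ^ 2 * ∑ t : Fin T, ((t : ℕ) : ℝ) ^ 2 := by
          rw [Finset.mul_sum]; apply Finset.sum_congr rfl; intro t _; ring
      _ ≤ (1 / T) * (a - b) ^ 2 * ((T : ℝ) ^ 3 / 3) := by
          gcongr
          rw [Fin.sum_univ_eq_sum_range (fun i => ((i : ℝ) ^ 2)) T]
          have := aux_sum_sq T
          have h3 : (3 : ℝ) * ∑ x ∈ Finset.range T, (x : ℝ) ^ 2 ≤ (T : ℝ) ^ 3 := by
            exact_mod_cast this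
          linarith
      _ = (T : ℝ) ^ 2 / 3 * (a - b) ^ 2 := by
          field_simp
  calc Real.sqrt (∑ t : Fin T, ‖((WithLp.equiv 2 (Fin T → ℂ)).symm (dT T a)
        - (WithLp.equiv 2 (Fin T → ℂ)).symm (dT T b)) t‖ ^ 2)
      ≤ Real.sqrt ((T : ℝ) ^ 2 / 3 * (a - b) ^ 2) := Real.sqrt_le_sqrt key
    _ = (T : ℝ) / Real.sqrt 3 * |a - b| := by
        rw [Real.sqrt_mul (by positivity), Real.sqrt_sq_eq_abs,
          Real.sqrt_div' _ (by norm_num), Real.sqrt_sq (Nat.cast_nonneg T)]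


/-- Lipschitz property of the quadratic form `λ ↦ d_T(λ)ᴴ R d_T(λ)` for a
Hermitian nonnegative definite matrix `R`:
`|d_T(λ)ᴴ R d_T(λ) − d_T(λ′)ᴴ R d_T(λ′)| ≤ (2/√3) ‖R‖ T |λ − λ′|`. -/
theorem quadratic_form_dT_lipschitz
    (T : ℕ) (R : Matrix (Fin T) (Fin T) ℂ) (hR : R.PosSemidef) (lam lam' : ℝ) :
    ‖star (dT T lam) ⬝ᵥ R *ᵥ dT T lam - star (dT T lam') ⬝ᵥ R *ᵥ dT T lam'‖
      ≤ (2 / Real.sqrt 3) * specNorm R * T * |lam - lam'| := by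
  rcases Nat.eq_zero_or_pos T with hT | hT
  · subst hT
    simp [dotProduct]
  have hqf : ∀ a : ℝ, (inner ℂ ((WithLp.equiv 2 (Fin T → ℂ)).symm (dT T a))
      (Matrix.toEuclideanCLM (𝕜 := ℂ) R ((WithLp.equiv 2 (Fin T → ℂ)).symm (dT T a))) : ℂ)
      = star (dT T a) ⬝ᵥ R *ᵥ dT T a := by
    intro a
    rw [EuclideanSpace.inner_eq_star_dotProduct]
    simp [Matrix.toLin'_apply]
    exact dotProduct_comm _ _
  set A := Matrix.toEuclideanCLM (𝕜 := ℂ) R with hA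
  set x := (WithLp.equiv 2 (Fin T → ℂ)).symm (dT T lam) with hx
  set y := (WithLp.equiv 2 (Fin T → ℂ)).symm (dT T lam') with hy
  rw [← hqf lam, ← hqf lam']
  have hsplit : (inner ℂ x (A x) : ℂ) - inner ℂ y (A y)
      = (inner ℂ x (A (x - y)) : ℂ) + inner ℂ (x - y) (A y) := by
    rw [map_sub, inner_sub_right, inner_sub_left]
    ring
  rw [hsplit]
  have hnx : ‖x‖ = 1 := aux_dT_norm T hT lam
  have hny : ‖y‖ = 1 := aux_dT_norm T hT lam'
  have hxy : ‖x - y‖ ≤ (T : ℝ) / Real.sqrt 3 * |lam - lam'| := aux_dT_sub_norm T hT lam lam'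
  have h1 : ‖(inner ℂ x (A (x - y)) : ℂ)‖ ≤ ‖A‖ * ‖x - y‖ := by
    calc ‖(inner ℂ x (A (x - y)) : ℂ)‖ ≤ ‖x‖ * ‖A (x - y)‖ := norm_inner_le_norm _ _
      _ ≤ ‖x‖ * (‖A‖ * ‖x - y‖) := by gcongr; exact A.le_opNorm _
      _ = ‖A‖ * ‖x - y‖ := by rw [hnx]; ring
  have h2 : ‖(inner ℂ (x - y) (A y) : ℂ)‖ ≤ ‖A‖ * ‖x - y‖ := by
    calc ‖(inner ℂ (x - y) (A y) : ℂ)‖ ≤ ‖x - y‖ * ‖A y‖ := norm_inner_le_norm _ _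
      _ ≤ ‖x - y‖ * (‖A‖ * ‖y‖) := by gcongr; exact A.le_opNorm _
      _ = ‖A‖ * ‖x - y‖ := by rw [hny]; ring
  calc ‖(inner ℂ x (A (x - y)) : ℂ) + inner ℂ (x - y) (A y)‖
      ≤ ‖(inner ℂ x (A (x - y)) : ℂ)‖ + ‖(inner ℂ (x - y) (A y) : ℂ)‖ := norm_add_le _ _
    _ ≤ ‖A‖ * ‖x - y‖ + ‖A‖ * ‖x - y‖ := add_le_add h1 h2
    _ = 2 * ‖A‖ * ‖x - y‖ := by ring
    _ ≤ 2 * ‖A‖ * ((T : ℝ) / Real.sqrt 3 * |lam - lam'|) := by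
        gcongr
    _ = (2 / Real.sqrt 3) * specNorm R * T * |lam - lam'| := by
        rw [specNorm]; ring
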